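/- Define g₁(a,b,c) = (8/9)(a² − 2√2·ac + 2c²) and h(θ) = (cos θ + √3·sin θ + √(10 − cos(2θ) + √3·sin(2θ)))/(2√2). Then for every θ ∈ [0, π/3], writing h = h(θ), one has (3/(32π))·∫_{2·arctan(h)}^{π} g₁(cos θ sin φ, sin θ sin φ, cos φ)·sin φ dφ = (6h⁴ + 8√2·h³·cos θ + 3h²·(1 + cos(2θ)) + (3 + cos(2θ))) / (18π·(1 + h²)³). -/

import Mathlib

open Real

/-- First term of the maximum defining the squared-width function of the regular
tetrahedron: `g₁(a,b,c) = (8/9)(a² − 2√2·ac + 2c²)`. -/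
noncomputable def g₁ (a b c : ℝ) : ℝ :=
  (8/9) * (a ^ 2 - 2 * Real.sqrt 2 * a * c + 2 * c ^ 2)

/-- `h(θ) = (cos θ + √3 sin θ + √(10 − cos 2θ + √3 sin 2θ)) / (2√2)`. -/
noncomputable def h (θ : ℝ) : ℝ :=
  (Real.cos θ + Real.sqrt 3 * Real.sin θ +
    Real.sqrt (10 - Real.cos (2 * θ) + Real.sqrt 3 * Real.sin (2 * θ))) / (2 * Real.sqrt 2)

/-- Closed form for the inner integral of the normalized term `g₁` of the tetrahedral
squared-width function over `φ ∈ [2 arctan (h θ), π]`. -/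
theorem tetra_inner_integral (θ : ℝ) (hθ : θ ∈ Set.Icc (0 : ℝ) (π / 3)) :
    (3 / (32 * π)) *
      ∫ φ in (2 * Real.arctan (h θ))..π,
        g₁ (Real.cos θ * Real.sin φ) (Real.sin θ * Real.sin φ) (Real.cos φ) * Real.sin φ
      = (6 * h θ ^ 4 + 8 * Real.sqrt 2 * h θ ^ 3 * Real.cos θ
          + 3 * h θ ^ 2 * (1 + Real.cos (2 * θ)) + (3 + Real.cos (2 * θ)))
        / (18 * π * (1 + h θ ^ 2) ^ 3) := by
  set t := h θ with ht
  set c := Real.cos θ with hc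
  set α := 2 * Real.arctan t with hα
  set p : ℝ := -(8/9) * c^2 with hp
  set q : ℝ := (8/9) * (c^2 - 2) / 3 with hq
  set r : ℝ := -(8/9) * (2 * Real.sqrt 2 * c) / 3 with hr
  set F : ℝ → ℝ := fun φ =>
    p * Real.cos φ + q * (Real.cos φ)^3 + r * (Real.sin φ)^3 with hF
  have key : ∀ φ ∈ Set.uIcc α π, HasDerivAt F
      (g₁ (c * Real.sin φ) (Real.sin θ * Real.sin φ) (Real.cos φ) * Real.sin φ) φ := by
    intro φ _
    have hcos := Real.hasDerivAt_cos φ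
    have hsin := Real.hasDerivAt_sin φ
    have H := ((hcos.const_mul p).add (((hcos.pow 3)).const_mul q)).add
      (((hsin.pow 3)).const_mul r)
    refine (H : HasDerivAt F _ φ).congr_deriv (Eq.symm ?_)
    simp only [g₁, hp, hq, hr]
    push_cast
    linear_combination (8/9 * c^2 * Real.sin φ) * (Real.sin_sq_add_cos_sq φ)
  have hcont : IntervalIntegrable
      (fun φ => g₁ (c * Real.sin φ) (Real.sin θ * Real.sin φ) (Real.cos φ) * Real.sin φ)
      MeasureTheory.volume α π := by
    apply Continuous.intervalIntegrable
    unfold g₁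
    continuity
  rw [intervalIntegral.integral_eq_sub_of_hasDerivAt key hcont]
  have hpos : (0:ℝ) < 1 + t^2 := by positivity
  have hsq : Real.sqrt (1 + t^2) ^ 2 = 1 + t^2 := Real.sq_sqrt hpos.le
  have hsqrtne : Real.sqrt (1 + t^2) ≠ 0 := by positivity
  have hcosα : Real.cos α = (1 - t^2) / (1 + t^2) := by
    rw [hα, Real.cos_two_mul, Real.cos_arctan]
    field_simp
    linarith [hsq]
  have hsinα : Real.sin α = 2 * t / (1 + t^2) := by
    rw [hα, Real.sin_two_mul, Real.sin_arctan, Real.cos_arctan]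
    field_simp
    rw [hsq]
  have hs2 : Real.sqrt 2 ^ 2 = 2 := Real.sq_sqrt (by norm_num)
  have h2θ : Real.cos (2 * θ) = 2 * c^2 - 1 := Real.cos_two_mul θ
  simp only [hF, Real.cos_pi, Real.sin_pi, hcosα, hsinα, h2θ, hp, hq, hr]
  have hπ : (π : ℝ) ≠ 0 := Real.pi_ne_zero
  field_simp
  ring_nf
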